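/- Let n ≥ 3 and let h and w be real symmetric n×n matrices. Suppose the rank of h is at least 3, and suppose that for all indices i, j, k, l one has h_{ik}·w_{jl} + h_{jl}·w_{ik} = h_{il}·w_{jk} + h_{jk}·w_{il} (i.e. the Kulkarni–Nomizu type product of h and w vanishes, which is the linearized Gauss equation for hypersurfaces). Then w = 0. -/

import Mathlib

open Matrix Module Finset

namespace Stmt0Aux

variable {n : ℕ}

/-- The bilinear form associated to a matrix. -/
noncomputable def q (M : Matrix (Fin n) (Fin n) ℝ) (x y : Fin n → ℝ) : ℝ :=
  x ⬝ᵥ M.mulVec y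

lemma q_expand (M : Matrix (Fin n) (Fin n) ℝ) (x y : Fin n → ℝ) :
    q M x y = ∑ i, ∑ k, x i * y k * M i k := by
  unfold q
  simp only [dotProduct, mulVec, Finset.mul_sum]
  exact Finset.sum_congr rfl fun i _ => Finset.sum_congr rfl fun k _ => by ring

lemma q_symm {M : Matrix (Fin n) (Fin n) ℝ} (hM : M.IsSymm) (x y : Fin n → ℝ) :
    q M x y = q M y x := by
  rw [q_expand, q_expand, Finset.sum_comm]
  exact Finset.sum_congr rfl fun i _ => Finset.sum_congr rfl fun k _ => by
    rw [hM.apply i k]; ring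

lemma q_single (M : Matrix (Fin n) (Fin n) ℝ) (i j : Fin n) :
    q M (Pi.single i 1) (Pi.single j 1) = M i j := by
  unfold q
  rw [Matrix.mulVec_single, single_dotProduct]
  simp

lemma q_add_left (M : Matrix (Fin n) (Fin n) ℝ) (x y z : Fin n → ℝ) :
    q M (x + y) z = q M x z + q M y z := by
  unfold q; rw [add_dotProduct]

lemma q_add_right (M : Matrix (Fin n) (Fin n) ℝ) (x y z : Fin n → ℝ) :
    q M x (y + z) = q M x y + q M x z := by
  unfold q; rw [mulVec_add, dotProduct_add]

lemma q_sub_left (M : Matrix (Fin n) (Fin n) ℝ) (x y z : Fin n → ℝ) :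
    q M (x - y) z = q M x z - q M y z := by
  unfold q; rw [sub_dotProduct]

lemma q_sub_right (M : Matrix (Fin n) (Fin n) ℝ) (x y z : Fin n → ℝ) :
    q M x (y - z) = q M x y - q M x z := by
  unfold q; rw [mulVec_sub, dotProduct_sub]

lemma q_smul_left (M : Matrix (Fin n) (Fin n) ℝ) (c : ℝ) (x y : Fin n → ℝ) :
    q M (c • x) y = c * q M x y := by
  unfold q; rw [smul_dotProduct]; simp

lemma q_smul_right (M : Matrix (Fin n) (Fin n) ℝ) (c : ℝ) (x y : Fin n → ℝ) :
    q M x (c • y) = c * q M x y := by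
  unfold q; rw [mulVec_smul, dotProduct_smul]; simp

lemma exists_q_ne_zero {M : Matrix (Fin n) (Fin n) ℝ} (hs : M.IsSymm) (hM : M ≠ 0) :
    ∃ u, q M u u ≠ 0 := by
  by_contra hc
  push_neg at hc
  apply hM
  ext i j
  have hij := hc (Pi.single i 1 + Pi.single j 1)
  have hii := hc (Pi.single i 1)
  have hjj := hc (Pi.single j 1)
  rw [q_add_left, q_add_right, q_add_right] at hij
  rw [q_single, q_single, q_single, q_single] at hij
  rw [q_single] at hii
  rw [q_single] at hjj
  have hsym := hs.apply i j
  simp only [Matrix.zero_apply]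
  linarith

lemma vecMulVec_mulVec (a b v : Fin n → ℝ) :
    (vecMulVec a b).mulVec v = (b ⬝ᵥ v) • a := by
  funext i
  simp only [mulVec, vecMulVec_apply, dotProduct, Pi.smul_apply, smul_eq_mul, Finset.sum_mul]
  exact Finset.sum_congr rfl fun j _ => by ring

lemma rank_vecMulVec_le (a b : Fin n → ℝ) : (vecMulVec a b).rank ≤ 1 := by
  rw [Matrix.rank]
  have hle : LinearMap.range (vecMulVec a b).mulVecLin ≤ Submodule.span ℝ {a} := by
    rintro _ ⟨v, rfl⟩
    rw [mulVecLin_apply, vecMulVec_mulVec]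
    exact Submodule.smul_mem _ _ (Submodule.mem_span_singleton_self a)
  refine le_trans (Submodule.finrank_mono hle) ?_
  refine le_trans (finrank_span_le_card ({a} : Set (Fin n → ℝ))) ?_
  simp

lemma rank_add_le (A B : Matrix (Fin n) (Fin n) ℝ) : (A + B).rank ≤ A.rank + B.rank := by
  rw [Matrix.rank, Matrix.rank, Matrix.rank, Matrix.mulVecLin_add]
  have hle : LinearMap.range (A.mulVecLin + B.mulVecLin)
      ≤ LinearMap.range A.mulVecLin ⊔ LinearMap.range B.mulVecLin := by
    rintro _ ⟨v, rfl⟩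
    exact Submodule.add_mem_sup (LinearMap.mem_range_self _ v) (LinearMap.mem_range_self _ v)
  exact le_trans (Submodule.finrank_mono hle)
    (Submodule.finrank_add_le_finrank_add_finrank _ _)

lemma q_vecMulVec (a b x y : Fin n → ℝ) :
    q (vecMulVec a b) x y = (x ⬝ᵥ a) * (b ⬝ᵥ y) := by
  unfold q
  rw [vecMulVec_mulVec, dotProduct_smul]
  simp [mul_comm]

lemma step {h : Matrix (Fin n) (Fin n) ℝ} (hs : h.IsSymm) (u : Fin n → ℝ)
    (hd : q h u u ≠ 0) :
    ∃ h' : Matrix (Fin n) (Fin n) ℝ, h'.IsSymm ∧ h.rank ≤ h'.rank + 1 ∧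
      ∀ x y, q h' x y = q h x y - q h x u * q h u y / q h u u := by
  set a : Fin n → ℝ := h.mulVec u with ha
  refine ⟨h - (q h u u)⁻¹ • vecMulVec a a, ?_, ?_, ?_⟩
  · -- symmetry
    unfold Matrix.IsSymm
    rw [transpose_sub, transpose_smul, hs]
    congr 1
    ext i j
    simp [vecMulVec_apply, mul_comm]
  · -- rank
    have heq : h = (h - (q h u u)⁻¹ • vecMulVec a a) + (q h u u)⁻¹ • vecMulVec a a := by
      ring_nf
      exact (sub_add_cancel _ _).symm
    have hsm : (q h u u)⁻¹ • vecMulVec a a = vecMulVec ((q h u u)⁻¹ • a) a := by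
      ext i j
      simp [vecMulVec_apply]
      ring
    calc h.rank = ((h - (q h u u)⁻¹ • vecMulVec a a) + (q h u u)⁻¹ • vecMulVec a a).rank := by
          rw [← heq]
      _ ≤ (h - (q h u u)⁻¹ • vecMulVec a a).rank + ((q h u u)⁻¹ • vecMulVec a a).rank :=
          rank_add_le _ _
      _ ≤ (h - (q h u u)⁻¹ • vecMulVec a a).rank + 1 := by
          rw [hsm]
          exact Nat.add_le_add_left (rank_vecMulVec_le _ _) _
  · -- formula
    intro x y
    have hq : q (h - (q h u u)⁻¹ • vecMulVec a a) x y
        = q h x y - (q h u u)⁻¹ * q (vecMulVec a a) x y := by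
      unfold q
      rw [sub_mulVec, dotProduct_sub, smul_mulVec, dotProduct_smul]
      simp
    rw [hq, q_vecMulVec]
    have h1 : x ⬝ᵥ a = q h x u := rfl
    have h2 : a ⬝ᵥ y = q h u y := by
      rw [dotProduct_comm, ha]
      have : y ⬝ᵥ h.mulVec u = q h y u := rfl
      rw [this, q_symm hs y u]
    rw [h1, h2]
    field_simp

lemma proj_orth {M : Matrix (Fin n) (Fin n) ℝ} (u v : Fin n → ℝ) (hd : q M u u ≠ 0) :
    q M (v - (q M v u / q M u u) • u) u = 0 := by
  simp only [q_sub_left, q_smul_left]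
  field_simp
  ring

lemma proj_self {M : Matrix (Fin n) (Fin n) ℝ} (u v : Fin n → ℝ) (hd : q M u u ≠ 0) :
    q M (v - (q M v u / q M u u) • u) (v - (q M v u / q M u u) • u)
      = q M v v - q M v u * q M u v / q M u u := by
  simp only [q_sub_left, q_smul_left, q_sub_right, q_smul_right]
  field_simp <;> ring

lemma ortho3 {h : Matrix (Fin n) (Fin n) ℝ} (hs : h.IsSymm) (hr : 3 ≤ h.rank) :
    ∃ u1 u2 u3 : Fin n → ℝ, q h u1 u1 ≠ 0 ∧ q h u2 u2 ≠ 0 ∧ q h u3 u3 ≠ 0 ∧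
      q h u1 u2 = 0 ∧ q h u1 u3 = 0 ∧ q h u2 u3 = 0 := by
  have h0 : h ≠ 0 := by
    rintro rfl; rw [Matrix.rank_zero] at hr; omega
  obtain ⟨u1, hu1⟩ := exists_q_ne_zero hs h0
  obtain ⟨h1, h1s, h1r, h1q⟩ := step hs u1 hu1
  have h1ne : h1 ≠ 0 := by
    rintro rfl; rw [Matrix.rank_zero] at h1r; omega
  obtain ⟨v2, hv2⟩ := exists_q_ne_zero h1s h1ne
  obtain ⟨h2, h2s, h2r, h2q⟩ := step h1s v2 hv2
  have h2ne : h2 ≠ 0 := by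
    rintro rfl; rw [Matrix.rank_zero] at h2r; omega
  obtain ⟨v3, hv3⟩ := exists_q_ne_zero h2s h2ne
  -- key fact : q h1 x u1 = 0 for every x
  have h1u1 : ∀ x, q h1 x u1 = 0 := by
    intro x
    rw [h1q]
    field_simp
    ring
  set u2 : Fin n → ℝ := v2 - (q h v2 u1 / q h u1 u1) • u1 with hu2def
  have horth21 : q h u2 u1 = 0 := proj_orth u1 v2 hu1
  have horth12 : q h u1 u2 = 0 := by rw [q_symm hs u1 u2, horth21]
  have hqu2 : q h u2 u2 = q h1 v2 v2 := by
    rw [proj_self u1 v2 hu1, h1q]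
  have hu2 : q h u2 u2 ≠ 0 := by rw [hqu2]; exact hv2
  set w3 : Fin n → ℝ := v3 - (q h1 v3 v2 / q h1 v2 v2) • v2 with hw3def
  have hw3v2 : q h1 w3 v2 = 0 := proj_orth v2 v3 hv2
  have hw3w3 : q h1 w3 w3 = q h2 v3 v3 := by
    rw [proj_self v2 v3 hv2, h2q]
  set u3 : Fin n → ℝ := w3 - (q h w3 u1 / q h u1 u1) • u1 with hu3def
  have horth31 : q h u3 u1 = 0 := proj_orth u1 w3 hu1
  have horth13 : q h u1 u3 = 0 := by rw [q_symm hs u1 u3, horth31]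
  have hqu3 : q h u3 u3 = q h2 v3 v3 := by
    rw [proj_self u1 w3 hu1, ← hw3w3, h1q]
  have hu3 : q h u3 u3 ≠ 0 := by rw [hqu3]; exact hv3
  have horth32 : q h u3 u2 = 0 := by
    have e1 : q h u3 u2 = q h w3 u2 := by
      rw [hu3def, q_sub_left, q_smul_left, horth12]
      ring
    have e2 : q h w3 u2 = q h1 w3 u2 := by
      rw [h1q, q_symm hs u1 u2, horth21]
      field_simp
      ring
    have e3 : q h1 w3 u2 = 0 := by
      rw [hu2def, q_sub_right, q_smul_right, hw3v2, h1u1 w3]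
      ring
    rw [e1, e2, e3]
  have horth23 : q h u2 u3 = 0 := by rw [q_symm hs u2 u3, horth32]
  exact ⟨u1, u2, u3, hu1, hu2, hu3, horth12, horth13, horth23⟩

lemma key {h w : Matrix (Fin n) (Fin n) ℝ} (hhsymm : h.IsSymm) (hwsymm : w.IsSymm)
    (hKN : ∀ i j k l : Fin n,
      h i k * w j l + h j l * w i k = h i l * w j k + h j k * w i l)
    (x y z t : Fin n → ℝ) :
    q h x z * q w y t + q h y t * q w x z = q h x t * q w y z + q h y z * q w x t := by
  have P : ∀ i k, h i k * q w y t + w i k * q h y t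
      = (h.mulVec t) i * (w.mulVec y) k + (w.mulVec t) i * (h.mulVec y) k := by
    intro i k
    rw [q_expand, q_expand]
    simp only [mulVec, dotProduct, Finset.mul_sum, Finset.sum_mul]
    rw [← sub_eq_zero]
    simp only [← Finset.sum_sub_distrib, ← Finset.sum_add_distrib]
    refine Finset.sum_eq_zero fun j _ => Finset.sum_eq_zero fun l _ => ?_
    have e1 := hKN i j k l
    have e2 := hwsymm.apply k j
    have e3 := hhsymm.apply k j
    linear_combination (y j * t l) * e1 + (h i l * t l * y j) * e2 + (w i l * t l * y j) * e3
  have L : q h x z * q w y t + q h y t * q w x z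
      = ∑ i, ∑ k, x i * z k * (h i k * q w y t + w i k * q h y t) := by
    rw [q_expand h x z, q_expand w x z]
    simp only [Finset.sum_mul, Finset.mul_sum, ← Finset.sum_add_distrib]
    exact Finset.sum_congr rfl fun i _ => Finset.sum_congr rfl fun k _ => by ring
  have R : q h x t * q w y z + q h y z * q w x t
      = ∑ i, ∑ k, x i * z k *
        ((h.mulVec t) i * (w.mulVec y) k + (w.mulVec t) i * (h.mulVec y) k) := by
    rw [q_symm hwsymm y z, q_symm hhsymm y z, mul_comm (q h z y) (q w x t)]
    unfold q
    simp only [dotProduct]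
    rw [Finset.sum_mul_sum, Finset.sum_mul_sum]
    simp only [← Finset.sum_add_distrib]
    exact Finset.sum_congr rfl fun i _ => Finset.sum_congr rfl fun k _ => by ring
  rw [L, R]
  exact Finset.sum_congr rfl fun i _ => Finset.sum_congr rfl fun k _ => by rw [P i k]

end Stmt0Aux

/-- If `h` and `w` are real symmetric `n × n` matrices (`n ≥ 3`), the rank of `h`
is at least 3, and the Kulkarni–Nomizu type product of `h` and `w` vanishes (the linearized
Gauss equation), then `w = 0`. -/
theorem stmt_0 (n : ℕ) (hn : 3 ≤ n) (h w : Matrix (Fin n) (Fin n) ℝ)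
    (hhsymm : h.IsSymm) (hwsymm : w.IsSymm)
    (hrank : 3 ≤ h.rank)
    (hKN : ∀ i j k l : Fin n,
      h i k * w j l + h j l * w i k = h i l * w j k + h j k * w i l) :
    w = 0 := by
  classical
  obtain ⟨u1, u2, u3, d1, d2, d3, o12, o13, o23⟩ := Stmt0Aux.ortho3 hhsymm hrank
  have K := Stmt0Aux.key hhsymm hwsymm hKN
  have o21 : Stmt0Aux.q h u2 u1 = 0 := by rw [Stmt0Aux.q_symm hhsymm u2 u1, o12]
  have o31 : Stmt0Aux.q h u3 u1 = 0 := by rw [Stmt0Aux.q_symm hhsymm u3 u1, o13]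
  have o32 : Stmt0Aux.q h u3 u2 = 0 := by rw [Stmt0Aux.q_symm hhsymm u3 u2, o23]
  -- diagonal values of w vanish
  have E12 := K u1 u2 u1 u2
  have E23 := K u2 u3 u2 u3
  have E13 := K u1 u3 u1 u3
  rw [o12, o21] at E12
  rw [o23, o32] at E23
  rw [o13, o31] at E13
  simp only [zero_mul, mul_zero, add_zero, zero_add] at E12 E23 E13
  set D1 := Stmt0Aux.q h u1 u1 with hD1
  set D2 := Stmt0Aux.q h u2 u2 with hD2
  set D3 := Stmt0Aux.q h u3 u3 with hD3
  have hW2 : Stmt0Aux.q w u2 u2 = 0 := by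
    have h2d : 2 * D1 * D3 * Stmt0Aux.q w u2 u2 = 0 := by
      linear_combination D3 * E12 - D2 * E13 + D1 * E23
    exact (mul_eq_zero.mp h2d).resolve_left (mul_ne_zero (mul_ne_zero two_ne_zero d1) d3)
  have hW1 : Stmt0Aux.q w u1 u1 = 0 := by
    have hd : D2 * Stmt0Aux.q w u1 u1 = 0 := by linear_combination E12 - D1 * hW2
    exact (mul_eq_zero.mp hd).resolve_left d2
  have hW3 : Stmt0Aux.q w u3 u3 = 0 := by
    have hd : D2 * Stmt0Aux.q w u3 u3 = 0 := by linear_combination E23 - D3 * hW2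
    exact (mul_eq_zero.mp hd).resolve_left d2
  -- off-diagonal values of w on the u's vanish
  have qw12 : Stmt0Aux.q w u1 u2 = 0 := by
    have F := K u3 u1 u3 u2
    rw [o12, o32, o13, hW3] at F
    simp only [zero_mul, mul_zero, add_zero, zero_add] at F
    exact (mul_eq_zero.mp F).resolve_left d3
  have qw13 : Stmt0Aux.q w u1 u3 = 0 := by
    have F := K u2 u1 u2 u3
    rw [o13, o23, o12, hW2] at F
    simp only [zero_mul, mul_zero, add_zero, zero_add] at F
    exact (mul_eq_zero.mp F).resolve_left d2
  have qw23 : Stmt0Aux.q w u2 u3 = 0 := by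
    have F := K u1 u2 u1 u3
    rw [o23, o13, o21, hW1] at F
    simp only [zero_mul, mul_zero, add_zero, zero_add] at F
    exact (mul_eq_zero.mp F).resolve_left d1
  have qw21 : Stmt0Aux.q w u2 u1 = 0 := by rw [Stmt0Aux.q_symm hwsymm u2 u1, qw12]
  have qw31 : Stmt0Aux.q w u3 u1 = 0 := by rw [Stmt0Aux.q_symm hwsymm u3 u1, qw13]
  -- w vanishes against u1 and any vector
  have A1 : ∀ y, Stmt0Aux.q w u1 y = 0 := by
    intro y
    have F := K u2 u1 u2 y
    rw [hW2, qw12, o12] at F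
    simp only [zero_mul, mul_zero, add_zero, zero_add] at F
    exact (mul_eq_zero.mp F).resolve_left d2
  -- w vanishes identically
  have A : ∀ x y, Stmt0Aux.q w x y = 0 := by
    intro x y
    have F := K u1 x u1 y
    rw [hW1, A1 y, Stmt0Aux.q_symm hwsymm x u1, A1 x] at F
    simp only [zero_mul, mul_zero, add_zero, zero_add] at F
    exact (mul_eq_zero.mp F).resolve_left d1
  ext i j
  have := A (Pi.single i 1) (Pi.single j 1)
  rw [Stmt0Aux.q_single] at this
  simpa using this
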